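/- Let Λ ⊂ ℤⁿ be a primitive rank-r sublattice with ℤ-basis ℓ₁, …, ℓ_r, and let 𝒜(Λ) be the set of alternating n×n real matrices all of whose rows lie in ℝΛ and which have integer coordinates with respect to Λ, i.e., 𝒜(Λ) = {A ∈ M_n(ℝ)_alt : every row of A is in Λ}. Then the set {R_{ij} = ℓ_i ℓ_jᵀ - ℓ_j ℓ_iᵀ : 1 ≤ i < j ≤ r} is a ℤ-basis of the abelian group 𝒜(Λ). -/

import Mathlib

open Matrix Finset

variable {n r : ℕ}

def skewExt (c : {q : Fin r × Fin r // q.1 < q.2} → ℤ) : Matrix (Fin r) (Fin r) ℤ :=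
  fun i j => if h : i < j then c ⟨(i, j), h⟩ else if h' : j < i then -c ⟨(j, i), h'⟩ else 0

lemma outer_sum (ℓ : Fin r → Fin n → ℤ) (C : Matrix (Fin r) (Fin r) ℤ) :
    (Matrix.of ℓ)ᵀ * C * Matrix.of ℓ = ∑ i, ∑ j, C i j • vecMulVec (ℓ i) (ℓ j) := by
  ext a k
  simp only [Matrix.sum_apply, mul_apply, transpose_apply, Matrix.smul_apply, vecMulVec_apply,
    smul_eq_mul, of_apply]
  simp_rw [Finset.sum_mul]
  rw [Finset.sum_comm]
  exact Finset.sum_congr rfl fun i _ => Finset.sum_congr rfl fun j _ => by ring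

lemma zero_of_LCL (ℓ : Fin r → Fin n → ℤ) (hli : LinearIndependent ℤ ℓ)
    (C : Matrix (Fin r) (Fin r) ℤ) (h : (Matrix.of ℓ)ᵀ * C * Matrix.of ℓ = 0) : C = 0 := by
  have hfl := Fintype.linearIndependent_iff.mp hli
  rw [Matrix.mul_assoc] at h
  have hX : C * Matrix.of ℓ = 0 := by
    ext i k
    refine hfl (fun i => (C * Matrix.of ℓ) i k) ?_ i
    funext a
    have := congrFun (congrFun h a) k
    simpa [mul_apply, Finset.sum_apply, mul_comm] using this
  ext i j
  refine hfl (C i) ?_ j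
  funext k
  have := congrFun (congrFun hX i) k
  simpa [mul_apply, Finset.sum_apply] using this

lemma pair_sum {M : Type*} [AddCommGroup M] (c : {q : Fin r × Fin r // q.1 < q.2} → ℤ)
    (f : Fin r → Fin r → M) :
    ∑ q : {q : Fin r × Fin r // q.1 < q.2}, c q • (f q.1.1 q.1.2 - f q.1.2 q.1.1)
      = ∑ i, ∑ j, skewExt c i j • f i j := by
  classical
  set g : Fin r × Fin r → M := fun p => skewExt c p.1 p.2 • f p.1 p.2 +
    skewExt c p.2 p.1 • f p.2 p.1 with hg
  have key : ∀ q : {q : Fin r × Fin r // q.1 < q.2},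
      c q • (f q.1.1 q.1.2 - f q.1.2 q.1.1) = g q.1 := by
    rintro ⟨⟨i, j⟩, h⟩
    simp only [hg, skewExt, dif_pos h, dif_neg (lt_asymm h), dif_neg (lt_irrefl _)]
    rw [smul_sub, neg_smul]
    abel
  rw [Fintype.sum_congr _ _ key]
  have h1 : ∑ q : {q : Fin r × Fin r // q.1 < q.2}, g q.1
      = ∑ p ∈ univ.filter (fun p : Fin r × Fin r => p.1 < p.2), g p :=
    (Finset.sum_subtype _ (by simp) g).symm
  rw [h1]
  have h2 : ∑ i, ∑ j, skewExt c i j • f i j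
      = ∑ p : Fin r × Fin r, skewExt c p.1 p.2 • f p.1 p.2 := by
    rw [Fintype.sum_prod_type]
  rw [h2, ← Finset.sum_filter_add_sum_filter_not univ (fun p : Fin r × Fin r => p.1 < p.2)]
  have h3 : ∑ p ∈ univ.filter (fun p : Fin r × Fin r => ¬ p.1 < p.2),
        skewExt c p.1 p.2 • f p.1 p.2
      = ∑ p ∈ univ.filter (fun p : Fin r × Fin r => p.2 < p.1),
        skewExt c p.1 p.2 • f p.1 p.2 := by
    refine (Finset.sum_subset ?_ ?_).symm
    · intro p hp
      simp only [mem_filter, mem_univ, true_and] at hp ⊢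
      exact lt_asymm hp
    · intro p hp hnp
      simp only [mem_filter, mem_univ, true_and] at hp hnp
      simp [skewExt, dif_neg hp, dif_neg hnp]
  rw [h3]
  have h4 : ∑ p ∈ univ.filter (fun p : Fin r × Fin r => p.2 < p.1),
        skewExt c p.1 p.2 • f p.1 p.2
      = ∑ p ∈ univ.filter (fun p : Fin r × Fin r => p.1 < p.2),
        skewExt c p.2 p.1 • f p.2 p.1 := by
    refine Finset.sum_nbij' Prod.swap Prod.swap ?_ ?_ ?_ ?_ ?_ <;>
      simp [Prod.swap]
  rw [h4, ← Finset.sum_add_distrib]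

lemma exists_right_inv (ℓ : Fin r → Fin n → ℤ) (hli : LinearIndependent ℤ ℓ) :
    ∃ N : Matrix (Fin n) (Fin r) ℝ,
      (Matrix.of ℓ).map (Int.cast : ℤ → ℝ) * N = 1 := by
  classical
  set Lq : Matrix (Fin r) (Fin n) ℚ := (Matrix.of ℓ).map (Int.cast : ℤ → ℚ) with hLq
  have hliq : LinearIndependent ℚ (fun i => Lq i) := by
    rw [← LinearIndependent.iff_fractionRing (R := ℤ) (K := ℚ)]
    rw [Fintype.linearIndependent_iff] at hli ⊢
    intro g hgsum i
    refine hli g ?_ i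
    funext k
    have h := congrFun hgsum k
    simp only [Finset.sum_apply, Pi.smul_apply, Pi.zero_apply, hLq, Matrix.map_apply,
      of_apply, zsmul_eq_mul] at h
    have h2 : ((∑ i, g i * ℓ i k : ℤ) : ℚ) = 0 := by push_cast; exact h
    have h3 : (∑ i, g i * ℓ i k : ℤ) = 0 := by exact_mod_cast h2
    simpa [Finset.sum_apply, smul_eq_mul] using h3
  have hinj : Function.Injective Lq.vecMul := Matrix.vecMul_injective_iff.mpr hliq
  have hker : LinearMap.ker Lq.vecMulLinear = ⊥ := by
    rw [LinearMap.ker_eq_bot, Matrix.coe_vecMulLinear]; exact hinj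
  obtain ⟨gl, hgl⟩ := Lq.vecMulLinear.exists_leftInverse_of_injective hker
  have hgl' : ∀ v : Fin r → ℚ, gl (v ᵥ* Lq) = v := by
    intro v
    have := congrFun (congrArg (fun f => f.toFun) hgl) v
    simpa [Matrix.vecMulLinear_apply] using this
  set Nq : Matrix (Fin n) (Fin r) ℚ := Matrix.of fun k i => gl (Pi.single k 1) i with hNq
  have hvN : Nq.vecMulLinear = gl := by
    refine (Pi.basisFun ℚ (Fin n)).ext fun k => ?_
    rw [Pi.basisFun_apply]
    funext i
    simp [Matrix.vecMulLinear_apply, Matrix.single_one_vecMul, hNq]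
  have hLN : Lq * Nq = 1 := by
    ext i j
    have h1 : (Pi.single i 1 : Fin r → ℚ) ᵥ* (Lq * Nq) = Pi.single i 1 := by
      rw [← Matrix.vecMul_vecMul, Matrix.single_one_vecMul]
      have : Lq.row i ᵥ* Nq = Nq.vecMulLinear (Lq.row i) := rfl
      rw [this, hvN]
      have : Lq.row i = (Pi.single i 1 : Fin r → ℚ) ᵥ* Lq := (Matrix.single_one_vecMul i Lq).symm
      rw [this, hgl']
    have := congrFun h1 j
    rw [Matrix.single_one_vecMul] at this
    rw [show (Lq * Nq) i j = (Lq * Nq).row i j from rfl, this]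
    simp [Matrix.one_apply, Pi.single_apply, eq_comm]
  refine ⟨Nq.map (Rat.cast : ℚ → ℝ), ?_⟩
  have hmap : (Lq * Nq).map ((Rat.castHom ℝ) : ℚ → ℝ)
      = (1 : Matrix (Fin r) (Fin r) ℚ).map ((Rat.castHom ℝ) : ℚ → ℝ) := by rw [hLN]
  rw [Matrix.map_mul] at hmap
  simp only [hLq] at hmap
  rw [Matrix.map_map] at hmap
  have h1 : (Matrix.of ℓ).map ((Rat.castHom ℝ : ℚ → ℝ) ∘ (Int.cast : ℤ → ℚ))
      = (Matrix.of ℓ).map (Int.cast : ℤ → ℝ) := by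
    ext a k; simp
  have h2 : (1 : Matrix (Fin r) (Fin r) ℚ).map ((Rat.castHom ℝ) : ℚ → ℝ)
      = (1 : Matrix (Fin r) (Fin r) ℝ) := by
    ext a b; simp [Matrix.one_apply, apply_ite]
  rw [h1, h2] at hmap
  exact hmap


/-- if `Λ ⊂ ℤⁿ` is a primitive rank-`r` sublattice with ℤ-basis
`ℓ₁,…,ℓ_r`, then `{R_{ij} = ℓ_i ℓ_jᵀ - ℓ_j ℓ_iᵀ : i < j}` is a ℤ-basis of the
group `𝒜(Λ)` of alternating `n×n` integer matrices all of whose rows lie in `Λ`: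
a matrix is in `𝒜(Λ)` iff it is uniquely an integer combination of the `R_{ij}`. -/
theorem R_basis_of_alt_lattice (n r : ℕ) (ℓ : Fin r → (Fin n → ℤ))
    (hli : LinearIndependent ℤ ℓ)
    (hprim : ∀ v : Fin n → ℤ,
      (fun k => (v k : ℝ)) ∈ Submodule.span ℝ (Set.range fun i => fun k => (ℓ i k : ℝ)) →
      v ∈ Submodule.span ℤ (Set.range ℓ)) :
    ∀ A : Matrix (Fin n) (Fin n) ℤ,
      (Aᵀ = -A ∧ (∀ i, A i i = 0) ∧
        ∀ a, A a ∈ Submodule.span ℤ (Set.range ℓ)) ↔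
      ∃! c : {q : Fin r × Fin r // q.1 < q.2} → ℤ,
        A = ∑ q : {q : Fin r × Fin r // q.1 < q.2},
          c q • (vecMulVec (ℓ q.1.1) (ℓ q.1.2) - vecMulVec (ℓ q.1.2) (ℓ q.1.1)) := by
  
  classical
  intro A
  constructor
  · rintro ⟨hAT, hdiag, hrows⟩
    -- Step 1: coordinates of rows of A
    have hBex : ∀ a, ∃ b : Fin r → ℤ, ∑ i, b i • ℓ i = A a := fun a =>
      (Submodule.mem_span_range_iff_exists_fun ℤ).mp (hrows a)
    choose b hb using hBex
    set L : Matrix (Fin r) (Fin n) ℤ := Matrix.of ℓ with hL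
    set B : Matrix (Fin n) (Fin r) ℤ := Matrix.of b with hBdef
    have hAB : A = B * L := by
      ext a k
      have h := congrFun (hb a) k
      simp only [Finset.sum_apply, Pi.smul_apply, smul_eq_mul] at h
      rw [mul_apply]
      exact h.symm
    -- Step 2: antisymmetry transported
    have hT : Lᵀ * Bᵀ = (-B) * L := by
      rw [← Matrix.transpose_mul, ← hAB, hAT, hAB, Matrix.neg_mul]
    -- Step 3: over ℝ
    set Lr : Matrix (Fin r) (Fin n) ℝ := L.map (Int.cast : ℤ → ℝ) with hLr
    set Br : Matrix (Fin n) (Fin r) ℝ := B.map (Int.cast : ℤ → ℝ) with hBr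
    have hTR : Lrᵀ * Brᵀ = (-Br) * Lr := by
      have h2 : (Lᵀ * Bᵀ).map ((Int.castRingHom ℝ) : ℤ → ℝ)
          = ((-B) * L).map ((Int.castRingHom ℝ) : ℤ → ℝ) := by rw [hT]
      rw [Matrix.map_mul, Matrix.map_mul, Matrix.transpose_map, Matrix.transpose_map] at h2
      have h3 : (-B).map ((Int.castRingHom ℝ) : ℤ → ℝ) = -Br := by
        ext a i; simp [hBr]
      have h4 : B.map ((Int.castRingHom ℝ) : ℤ → ℝ) = Br := by ext a i; simp [hBr]
      have h5 : L.map ((Int.castRingHom ℝ) : ℤ → ℝ) = Lr := by ext a i; simp [hLr]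
      rw [h3, h4, h5] at h2
      exact h2
    obtain ⟨N, hN⟩ := exists_right_inv ℓ hli
    have hNL : Nᵀ * Lrᵀ = 1 := by
      rw [← Matrix.transpose_mul]
      rw [hLr, hL]
      rw [show (Matrix.of ℓ).map (Int.cast : ℤ → ℝ) * N = 1 from hN]
      exact Matrix.transpose_one
    have hBD : Brᵀ = (Nᵀ * (-Br)) * Lr := by
      calc Brᵀ = 1 * Brᵀ := (Matrix.one_mul _).symm
        _ = (Nᵀ * Lrᵀ) * Brᵀ := by rw [hNL]
        _ = Nᵀ * (Lrᵀ * Brᵀ) := Matrix.mul_assoc _ _ _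
        _ = Nᵀ * ((-Br) * Lr) := by rw [hTR]
        _ = (Nᵀ * (-Br)) * Lr := (Matrix.mul_assoc _ _ _).symm
    -- Step 4: rows of Bᵀ lie in the real span, hence in the lattice
    have hrowB : ∀ i, (Bᵀ) i ∈ Submodule.span ℤ (Set.range ℓ) := by
      intro i
      apply hprim
      rw [Submodule.mem_span_range_iff_exists_fun]
      refine ⟨fun j => (Nᵀ * (-Br)) i j, ?_⟩
      funext k
      have h := congrFun (congrFun hBD i) k
      simp only [Finset.sum_apply, Pi.smul_apply, smul_eq_mul]
      simp only [mul_apply, transpose_apply, hBr, hLr, hL, Matrix.map_apply, of_apply,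
        Matrix.neg_apply] at h ⊢
      exact h.symm
    have hDex : ∀ i, ∃ d : Fin r → ℤ, ∑ j, d j • ℓ j = (Bᵀ) i := fun i =>
      (Submodule.mem_span_range_iff_exists_fun ℤ).mp (hrowB i)
    choose d hd using hDex
    set D : Matrix (Fin r) (Fin r) ℤ := Matrix.of d with hDdef
    have hBt : Bᵀ = D * L := by
      ext i k
      have h := congrFun (hd i) k
      simp only [Finset.sum_apply, Pi.smul_apply, smul_eq_mul] at h
      rw [mul_apply]
      exact h.symm
    have hAE : A = Lᵀ * Dᵀ * L := by
      have hBeq : B = Lᵀ * Dᵀ := by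
        have h := congrArg Matrix.transpose hBt
        rwa [Matrix.transpose_transpose, Matrix.transpose_mul] at h
      rw [hAB, hBeq]
    -- Step 5: D is antisymmetric with zero diagonal
    have hskew : Dᵀ + D = 0 := by
      apply zero_of_LCL ℓ hli
      have hLL : (Matrix.of ℓ : Matrix (Fin r) (Fin n) ℤ) = L := rfl
      rw [hLL, Matrix.mul_add, Matrix.add_mul]
      have h1 : Lᵀ * D * L = Aᵀ := by
        rw [hAE, Matrix.transpose_mul, Matrix.transpose_mul, Matrix.transpose_transpose,
          Matrix.transpose_transpose, ← Matrix.mul_assoc]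
      rw [← hAE, h1, hAT, add_neg_cancel]
    have hdiagD : ∀ i, D i i = 0 := by
      intro i
      have h := congrFun (congrFun hskew i) i
      simp only [Matrix.add_apply, transpose_apply, Matrix.zero_apply] at h
      omega
    set c : {q : Fin r × Fin r // q.1 < q.2} → ℤ := fun q => Dᵀ q.1.1 q.1.2 with hc
    have hse : skewExt c = Dᵀ := by
      ext i j
      rcases lt_trichotomy i j with h | h | h
      · simp [skewExt, dif_pos h, hc]
      · subst h
        simp [skewExt, dif_neg (lt_irrefl i), transpose_apply, hdiagD i]
      · have h2 := congrFun (congrFun hskew j) i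
        simp only [Matrix.add_apply, transpose_apply, Matrix.zero_apply] at h2
        simp only [skewExt, dif_neg (lt_asymm h), dif_pos h, hc, transpose_apply]
        omega
    have key : ∀ c' : {q : Fin r × Fin r // q.1 < q.2} → ℤ,
        (∑ q : {q : Fin r × Fin r // q.1 < q.2},
          c' q • (vecMulVec (ℓ q.1.1) (ℓ q.1.2) - vecMulVec (ℓ q.1.2) (ℓ q.1.1)))
        = (Matrix.of ℓ)ᵀ * skewExt c' * (Matrix.of ℓ) := by
      intro c'
      rw [outer_sum ℓ (skewExt c'), ← pair_sum c' (fun i j => vecMulVec (ℓ i) (ℓ j))]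
    refine ⟨c, ?_, ?_⟩
    · show A = ∑ q : {q : Fin r × Fin r // q.1 < q.2},
        c q • (vecMulVec (ℓ q.1.1) (ℓ q.1.2) - vecMulVec (ℓ q.1.2) (ℓ q.1.1))
      rw [key c, hse]
      exact hAE
    · intro c' hc'
      have e1 : (Matrix.of ℓ)ᵀ * skewExt c' * (Matrix.of ℓ) = A := by
        rw [← key c']; exact hc'.symm
      have e2 : (Matrix.of ℓ)ᵀ * skewExt c * (Matrix.of ℓ) = A := by
        rw [hse]; exact hAE.symm
      have h0 : (Matrix.of ℓ)ᵀ * (skewExt c' - skewExt c) * (Matrix.of ℓ) = 0 := by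
        rw [Matrix.mul_sub, Matrix.sub_mul, e1, e2, sub_self]
      have hz := zero_of_LCL ℓ hli _ h0
      funext q
      have hq0 := congrFun (congrFun hz q.1.1) q.1.2
      have hq : c' ⟨(q.1.1, q.1.2), q.2⟩ - c ⟨(q.1.1, q.1.2), q.2⟩ = 0 := by
        simpa [skewExt, Matrix.sub_apply, q.2] using hq0
      exact sub_eq_zero.mp hq
  · rintro ⟨c, hcA, -⟩
    refine ⟨?_, ?_, ?_⟩
    · rw [hcA]
      ext a k
      simp only [transpose_apply, Matrix.neg_apply, Matrix.sum_apply, Matrix.smul_apply,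
        Matrix.sub_apply, vecMulVec_apply, smul_eq_mul]
      rw [← Finset.sum_neg_distrib]
      exact Finset.sum_congr rfl fun q _ => by ring
    · intro i
      rw [hcA]
      simp only [Matrix.sum_apply, Matrix.smul_apply, Matrix.sub_apply, vecMulVec_apply,
        smul_eq_mul]
      exact Finset.sum_eq_zero fun q _ => by ring
    · intro a
      rw [hcA]
      have hrow : (∑ q : {q : Fin r × Fin r // q.1 < q.2},
            c q • (vecMulVec (ℓ q.1.1) (ℓ q.1.2) - vecMulVec (ℓ q.1.2) (ℓ q.1.1))) a
          = ∑ q : {q : Fin r × Fin r // q.1 < q.2},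
            c q • (ℓ q.1.1 a • ℓ q.1.2 - ℓ q.1.2 a • ℓ q.1.1) := by
        funext k
        simp only [Finset.sum_apply, Matrix.sum_apply, Matrix.smul_apply, Matrix.sub_apply,
          vecMulVec_apply, Pi.smul_apply, Pi.sub_apply, smul_eq_mul]
      rw [hrow]
      refine Submodule.sum_mem _ fun q _ => Submodule.smul_mem _ _ ?_
      exact Submodule.sub_mem _
        (Submodule.smul_mem _ _ (Submodule.subset_span ⟨q.1.2, rfl⟩))
        (Submodule.smul_mem _ _ (Submodule.subset_span ⟨q.1.1, rfl⟩))
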